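/- Let p ≤ n and let B ∈ ℝ^{(n+1)×p} have orthonormal columns (Bᵀ B = I_p), and let bᵀ ∈ ℝ^{1×p} denote the first row of B. If ‖b‖² < 1/2, then there exists a vector y ∈ int K_{n+1} with y ≠ 0 such that Bᵀ y = 0. -/

import Mathlib

/-- Euclidean norm of the tail `x₁` of `x = (x₀; x₁) ∈ ℝ × ℝⁿ`. -/
noncomputable def tailNorm {n : ℕ} (x : EuclideanSpace ℝ (Fin (n + 1))) : ℝ :=
  Real.sqrt (∑ i : Fin n, x i.succ ^ 2)

/-- The second-order cone `K_{n+1} = {(x₀; x₁) : ‖x₁‖ ≤ x₀}`. -/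
def soc (n : ℕ) : Set (EuclideanSpace ℝ (Fin (n + 1))) :=
  {x | tailNorm x ≤ x 0}

/-- The boundary of the second-order cone: `{(x₀; x₁) : ‖x₁‖ = x₀}`. -/
def socBd (n : ℕ) : Set (EuclideanSpace ℝ (Fin (n + 1))) :=
  {x | tailNorm x = x 0}

/-- The interior of the second-order cone: `{(x₀; x₁) : ‖x₁‖ < x₀}`. -/
def socInt (n : ℕ) : Set (EuclideanSpace ℝ (Fin (n + 1))) :=
  {x | tailNorm x < x 0}

/-- `x̂ = (x₀; −x₁)` for `x = (x₀; x₁)`. -/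
def socHat {n : ℕ} (x : EuclideanSpace ℝ (Fin (n + 1))) : EuclideanSpace ℝ (Fin (n + 1)) :=
  WithLp.toLp 2 (fun i => if i = 0 then x 0 else -(x i))

/-- `B t` viewed as an element of Euclidean space. -/
def mvE {m p : ℕ} (B : Matrix (Fin m) (Fin p) ℝ) (t : Fin p → ℝ) : EuclideanSpace ℝ (Fin m) :=
  WithLp.toLp 2 (fun i => B.mulVec t i)

/-- A Euclidean vector viewed as a plain function. -/
def toFun {m : ℕ} (x : EuclideanSpace ℝ (Fin m)) : Fin m → ℝ := x

/-- Let `p ≤ n` and let `B ∈ ℝ^{(n+1)×p}` have orthonormal columns, with first row `bᵀ`.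
If `‖b‖² < 1/2`, then there exists `y ∈ int K_{n+1}` with `y ≠ 0` such that `Bᵀ y = 0`. -/
theorem stmt6 (n p : ℕ) (hp : p ≤ n)
    (B : Matrix (Fin (n + 1)) (Fin p) ℝ) (hB : B.transpose * B = 1)
    (hb : ∑ j, B 0 j ^ 2 < 1 / 2) :
    ∃ y : EuclideanSpace ℝ (Fin (n + 1)),
      y ∈ socInt n ∧ y ≠ 0 ∧ B.transpose.mulVec (toFun y) = 0 := by

  classical
  set c : Fin p → ℝ := fun j => B 0 j with hc
  set w : Fin (n + 1) → ℝ := B.mulVec c with hw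
  have hBtw : B.transpose.mulVec w = c := by
    rw [hw, Matrix.mulVec_mulVec, hB, Matrix.one_mulVec]
  set s : ℝ := ∑ j, c j ^ 2 with hs
  have hs0 : 0 ≤ s := Finset.sum_nonneg fun _ _ => sq_nonneg _
  have hslt : s < 1 / 2 := hb
  have hw0 : w 0 = s := by
    simp only [hw, Matrix.mulVec, dotProduct, hs, hc]
    exact Finset.sum_congr rfl fun j _ => by ring
  have hwnorm : ∑ i, w i ^ 2 = s := by
    have h1 : ∑ i, w i ^ 2 = dotProduct w w := by
      simp [dotProduct, sq]
    have h2 : dotProduct w w = dotProduct c c := by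
      conv_lhs => rw [hw, Matrix.dotProduct_mulVec, ← Matrix.mulVec_transpose, ← hw, hBtw]
    rw [h1, h2, hs]
    exact Finset.sum_congr rfl fun j _ => (sq (c j)).symm ▸ by ring
  set y : EuclideanSpace ℝ (Fin (n + 1)) := WithLp.toLp 2 (fun i => (if i = 0 then 1 else 0) - w i) with hy
  have hy0 : y 0 = 1 - s := by simp [hy, hw0]
  have hys : 0 < 1 - s := by linarith
  refine ⟨y, ?_, ?_, ?_⟩
  · -- membership in socInt
    have htail : ∑ i : Fin n, y i.succ ^ 2 = s - s ^ 2 := by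
      have h1 : ∀ i : Fin n, y i.succ = -w i.succ := by
        intro i
        simp [hy, Fin.succ_ne_zero]
      have h2 : ∑ i : Fin n, y i.succ ^ 2 = ∑ i : Fin n, w i.succ ^ 2 := by
        refine Finset.sum_congr rfl fun i _ => ?_
        rw [h1 i]; ring
      have h3 : ∑ i, w i ^ 2 = w 0 ^ 2 + ∑ i : Fin n, w i.succ ^ 2 :=
        Fin.sum_univ_succ _
      rw [h2]
      have := hwnorm
      rw [h3, hw0] at this
      linarith
    show tailNorm y < y 0
    rw [tailNorm, htail, hy0]
    rw [Real.sqrt_lt' hys]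
    nlinarith
  · intro h
    have h0 : y 0 = 0 := by rw [h]; rfl
    rw [hy0] at h0; linarith
  · -- Bᵀ y = 0
    have : B.transpose.mulVec (toFun y) =
        B.transpose.mulVec (fun i => if i = 0 then 1 else 0) - B.transpose.mulVec w := by
      rw [← Matrix.mulVec_sub]
      rfl
    rw [this, hBtw]
    funext j
    simp [Matrix.mulVec, dotProduct, Matrix.transpose_apply, hc]
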